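/- Let the n² edges of the complete bipartite graph K_{n,n} carry i.i.d. weights X_e distributed as a good random variable X, and let W_n = max over perfect matchings M of Σ_{e∈M} X_e. Then for every n ≥ 7, P(W_n > (1 + 1/n) · n · Λ*⁻¹(log n)) ≤ e^{−n}. -/

import Mathlib

open MeasureTheory ProbabilityTheory Real Filter

noncomputable section

-- Log-moment generating function `Λ`, valued in `EReal` (`⊤` when the exponential
-- moment is infinite).
open Classical in
def lmgf {Ω : Type*} [MeasurableSpace Ω] (μ : Measure Ω) (X : Ω → ℝ) (s : ℝ) : EReal :=
  if Integrable (fun ω => Real.exp (s * X ω)) μ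
  then ((Real.log (∫ ω, Real.exp (s * X ω) ∂μ) : ℝ) : EReal)
  else ⊤

/-- The Legendre transform `Λ*` of the log-moment generating function (rate function). -/
def rateFn {Ω : Type*} [MeasurableSpace Ω] (μ : Measure Ω) (X : Ω → ℝ) (t : ℝ) : EReal :=
  ⨆ s : ℝ, ((s * t : ℝ) : EReal) - lmgf μ X s

/-- The generalised inverse `Λ*⁻¹(t) = inf {s ≥ 0 : Λ*(s) ≥ t}`. -/
def rateFnInv {Ω : Type*} [MeasurableSpace Ω] (μ : Measure Ω) (X : Ω → ℝ) (t : ℝ) : ℝ :=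
  sInf {s : ℝ | 0 ≤ s ∧ (t : EReal) ≤ rateFn μ X s}

/-- `X` is symmetric: `-X` has the same distribution as `X`. -/
def SymmetricRV {Ω : Type*} [MeasurableSpace Ω] (μ : Measure Ω) (X : Ω → ℝ) : Prop :=
  Measure.map X μ = Measure.map (fun ω => -X ω) μ

/-- `Λ` is finite in a neighbourhood of `0`. -/
def FiniteLmgfNearZero {Ω : Type*} [MeasurableSpace Ω] (μ : Measure Ω) (X : Ω → ℝ) : Prop :=
  ∃ δ > (0:ℝ), ∀ s : ℝ, |s| < δ → lmgf μ X s ≠ ⊤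

/-- `X` has regular upper tails: `P(X > t) = exp(-(1+o(1)) Λ*(t))` as `t → ∞`
(vacuous at points where `Λ*(t) = ∞`). -/
def RegularUpperTails {Ω : Type*} [MeasurableSpace Ω] (μ : Measure Ω) (X : Ω → ℝ) : Prop :=
  ∀ ε > (0:ℝ), ∀ᶠ t in atTop, ∀ r : ℝ, rateFn μ X t = (r : EReal) →
    Real.exp (-(1+ε)*r) ≤ (μ {ω | t < X ω}).toReal ∧
    (μ {ω | t < X ω}).toReal ≤ Real.exp (-(1-ε)*r)

/-- A good random variable: symmetric, `Λ` finite near `0`, regular upper tails. -/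
def Good {Ω : Type*} [MeasurableSpace Ω] (μ : Measure Ω) (X : Ω → ℝ) : Prop :=
  SymmetricRV μ X ∧ FiniteLmgfNearZero μ X ∧ RegularUpperTails μ X

/-- The non-diagonal elements of `Sym2 (Fin n)`: the edges of the complete graph `K_n`. -/
abbrev EdgeT (n : ℕ) := {e : Sym2 (Fin n) // ¬ e.IsDiag}


/-- Total weight of a subgraph `G'` of `K_n` with edge weights `x`. -/
def graphWeight {n : ℕ} (x : EdgeT n → ℝ) (G' : SimpleGraph (Fin n)) : ℝ :=
  ∑ e : EdgeT n, Set.indicator {e' : EdgeT n | (e' : Sym2 (Fin n)) ∈ G'.edgeSet} x e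

/-- Total weight of the edges of a walk `p` with edge weights `x`. -/
def walkWeight {n : ℕ} (x : EdgeT n → ℝ) {u v : Fin n}
    (p : (⊤ : SimpleGraph (Fin n)).Walk u v) : ℝ :=
  ∑ e : EdgeT n, Set.indicator {e' : EdgeT n | (e' : Sym2 (Fin n)) ∈ p.edges} x e

end


section AuxiliaryLemmas

open MeasureTheory ProbabilityTheory Real

set_option linter.unusedSectionVars false
set_option linter.unusedVariables false
set_option linter.unnecessarySimpa false

lemma exp_le_ratio_aux (n : ℕ) (hn : 1 ≤ n) : Real.exp 1 ≤ ((n+1:ℝ)/n) ^ (n+1) := by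
  have hn0 : (0:ℝ) < n := by exact_mod_cast hn
  have h1 : (0:ℝ) < (n:ℝ)+1 := by positivity
  have key : Real.exp (1/((n:ℝ)+1)) ≤ ((n:ℝ)+1)/n := by
    have h := Real.add_one_le_exp (-(1/((n:ℝ)+1)))
    have hlhs : (0:ℝ) < 1 - 1/((n:ℝ)+1) := by
      rw [sub_pos, div_lt_one h1]; linarith
    have h' : 1 - 1/((n:ℝ)+1) ≤ Real.exp (-(1/((n:ℝ)+1))) := by linarith
    have h2 : Real.exp (1/((n:ℝ)+1)) ≤ (1 - 1/((n:ℝ)+1))⁻¹ := by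
      have := inv_anti₀ hlhs h'
      rwa [← Real.exp_neg, neg_neg] at this
    refine h2.trans (le_of_eq ?_)
    rw [eq_div_iff (ne_of_gt hn0), inv_mul_eq_div, div_eq_iff (by linarith : 1 - 1/((n:ℝ)+1) ≠ 0)]
    field_simp
    ring
  calc Real.exp 1 = Real.exp (1/((n:ℝ)+1)) ^ (n+1) := by
        rw [← Real.exp_nat_mul]
        congr 1
        push_cast
        field_simp
    _ ≤ (((n:ℝ)+1)/n) ^ (n+1) := by
        apply pow_le_pow_left₀ (Real.exp_nonneg _) key

lemma factorial_bound_aux : ∀ n : ℕ, 7 ≤ n → (n.factorial : ℝ) * Real.exp n ≤ (n:ℝ) ^ (n+1) := by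
  intro n hn
  induction n, hn using Nat.le_induction with
  | base =>
    have h7 : Real.exp 7 ≤ 2.7182818286 ^ (7:ℕ) := by
      calc Real.exp 7 = Real.exp 1 ^ (7:ℕ) := by
            rw [← Real.exp_nat_mul]; norm_num
        _ ≤ 2.7182818286 ^ (7:ℕ) := by
            apply pow_le_pow_left₀ (Real.exp_nonneg _) Real.exp_one_lt_d9.le
    calc ((7:ℕ).factorial : ℝ) * Real.exp 7 ≤ 5040 * 2.7182818286 ^ (7:ℕ) := by
          rw [show (7:ℕ).factorial = 5040 from rfl]
          push_cast
          nlinarith [Real.exp_pos (7:ℝ)]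
      _ ≤ (7:ℝ) ^ (7+1) := by norm_num
  | succ n hn ih =>
    have hn0 : (0:ℝ) < n := by positivity
    have hratio := exp_le_ratio_aux n (by omega)
    have hnn : (0:ℝ) ≤ (n:ℝ)^(n+1) := by positivity
    have key : ((n:ℝ)+1) * ((n.factorial : ℝ) * Real.exp n) * Real.exp 1
        ≤ ((n:ℝ)+1) * (n:ℝ)^(n+1) * (((n+1:ℝ)/n) ^ (n+1)) := by
      apply mul_le_mul _ hratio (Real.exp_nonneg _) (by positivity)
      have := mul_le_mul_of_nonneg_left ih (le_of_lt (by positivity : (0:ℝ) < (n:ℝ)+1))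
      linarith
    have heq1 : (((n:ℕ)+1).factorial : ℝ) * Real.exp ((n:ℕ)+1 : ℕ)
        = ((n:ℝ)+1) * ((n.factorial : ℝ) * Real.exp n) * Real.exp 1 := by
      rw [Nat.factorial_succ]
      push_cast
      rw [Real.exp_add]
      ring
    have heq2 : ((n:ℝ)+1) * (n:ℝ)^(n+1) * (((n+1:ℝ)/n) ^ (n+1)) = ((n:ℝ)+1) ^ (n+1+1) := by
      rw [div_pow]
      field_simp
      ring
    calc (((n:ℕ)+1).factorial : ℝ) * Real.exp ((n:ℕ)+1:ℕ)
        ≤ ((n:ℝ)+1) * (n:ℝ)^(n+1) * (((n+1:ℝ)/n) ^ (n+1)) := by rw [heq1]; exact key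
      _ = (((n:ℕ)+1:ℕ):ℝ) ^ (n+1+1) := by rw [heq2]; norm_num

variable {Ω : Type*} [MeasurableSpace Ω] {μ : Measure Ω} [IsProbabilityMeasure μ] {ξ : Ω → ℝ}

lemma lmgf_of_int {s : ℝ} (h : Integrable (fun ω => exp (s * ξ ω)) μ) :
    lmgf μ ξ s = ((Real.log (mgf ξ μ s) : ℝ) : EReal) := by
  rw [lmgf, if_pos h]; rfl

lemma lmgf_of_not_int {s : ℝ} (h : ¬ Integrable (fun ω => exp (s * ξ ω)) μ) :
    lmgf μ ξ s = ⊤ := by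
  rw [lmgf, if_neg h]

lemma lmgf_zero' : lmgf μ ξ 0 = (0 : EReal) := by
  have : Integrable (fun ω => exp (0 * ξ ω)) μ := by
    simpa using integrable_const (1:ℝ)
  rw [lmgf_of_int this, mgf_zero']
  simp

lemma symm_ident (hξ : Measurable ξ) (hs : SymmetricRV μ ξ) :
    IdentDistrib ξ (fun ω => -ξ ω) μ μ :=
  ⟨hξ.aemeasurable, hξ.neg.aemeasurable, hs⟩

lemma exp_ident (hξ : Measurable ξ) (hs : SymmetricRV μ ξ) (s : ℝ) :
    IdentDistrib (fun ω => exp (s * ξ ω)) (fun ω => exp (s * (-ξ ω))) μ μ := by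
  have h := (symm_ident hξ hs).comp (u := fun x => exp (s * x))
    (measurable_exp.comp (measurable_const_mul s))
  exact h

lemma mgf_one_le (hξ : Measurable ξ) (hs : SymmetricRV μ ξ) {s : ℝ}
    (h : Integrable (fun ω => exp (s * ξ ω)) μ) : 1 ≤ mgf ξ μ s := by
  have hid := exp_ident hξ hs s
  have hint2 : Integrable (fun ω => exp (s * (-ξ ω))) μ := hid.integrable_iff.mp h
  have hsum : ∀ ω, (2:ℝ) ≤ exp (s * ξ ω) + exp (s * (-ξ ω)) := by
    intro ω
    have h1 := Real.add_one_le_exp (s * ξ ω)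
    have h2 := Real.add_one_le_exp (s * (-ξ ω))
    have h3 : s * (-ξ ω) = -(s * ξ ω) := by ring
    linarith
  have hint : (2:ℝ) ≤ ∫ ω, (exp (s * ξ ω) + exp (s * (-ξ ω))) ∂μ := by
    calc (2:ℝ) = ∫ _, (2:ℝ) ∂μ := by simp
      _ ≤ _ := integral_mono (integrable_const 2) (h.add hint2) hsum
  rw [integral_add h hint2, ← hid.integral_eq] at hint
  rw [mgf]
  linarith

lemma log_mgf_nonneg (hξ : Measurable ξ) (hs : SymmetricRV μ ξ) {s : ℝ}
    (h : Integrable (fun ω => exp (s * ξ ω)) μ) : 0 ≤ Real.log (mgf ξ μ s) :=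
  Real.log_nonneg (mgf_one_le hξ hs h)

lemma rateFn_nonneg (t : ℝ) : (0 : EReal) ≤ rateFn μ ξ t := by
  have := le_iSup (fun s : ℝ => ((s * t : ℝ) : EReal) - lmgf μ ξ s) 0
  rw [lmgf_zero'] at this
  simpa [rateFn] using this

lemma rateFn_mono (hξ : Measurable ξ) (hs : SymmetricRV μ ξ) {s v : ℝ} (h0 : 0 ≤ s)
    (hsv : s ≤ v) : rateFn μ ξ s ≤ rateFn μ ξ v := by
  rw [rateFn]
  apply iSup_le
  intro lam
  by_cases hi : Integrable (fun ω => exp (lam * ξ ω)) μ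
  · rw [lmgf_of_int hi]
    rcases le_or_gt 0 lam with hl | hl
    · refine le_trans ?_ (le_iSup (fun l : ℝ => ((l * v : ℝ) : EReal) - lmgf μ ξ l) lam)
      rw [lmgf_of_int hi, ← EReal.coe_sub, ← EReal.coe_sub, EReal.coe_le_coe_iff]
      nlinarith
    · refine le_trans ?_ (rateFn_nonneg v)
      rw [← EReal.coe_sub, ← EReal.coe_zero, EReal.coe_le_coe_iff]
      have := log_mgf_nonneg hξ hs hi
      nlinarith
  · rw [lmgf_of_not_int hi, EReal.sub_top]
    exact bot_le

lemma rateFn_scale (hξ : Measurable ξ) (hs : SymmetricRV μ ξ) {v u r : ℝ} (hv : 0 ≤ v)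
    (hvu : v ≤ u) (hu : 0 < u) (hr0 : 0 ≤ r)
    (hr : ∀ lam : ℝ, 0 ≤ lam → Integrable (fun ω => exp (lam * ξ ω)) μ →
      lam * u - Real.log (mgf ξ μ lam) ≤ r) :
    rateFn μ ξ v ≤ ((v / u * r : ℝ) : EReal) := by
  rw [rateFn]
  apply iSup_le
  intro lam
  by_cases hi : Integrable (fun ω => exp (lam * ξ ω)) μ
  · rw [lmgf_of_int hi, ← EReal.coe_sub, EReal.coe_le_coe_iff]
    have hL := log_mgf_nonneg hξ hs hi
    have hvu1 : v / u ≤ 1 := by rw [div_le_one hu]; exact hvu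
    have hvu0 : 0 ≤ v / u := by positivity
    rcases le_or_gt 0 lam with hl | hl
    · have h1 := hr lam hl hi
      have h2 : lam * v - Real.log (mgf ξ μ lam) ≤ v / u * (lam * u - Real.log (mgf ξ μ lam)) := by
        have h3 : lam * v = v / u * (lam * u) := by field_simp
        nlinarith
      nlinarith
    · nlinarith
  · rw [lmgf_of_not_int hi, EReal.sub_top]
    exact bot_le

lemma lmgf_lower (hξ : Measurable ξ) {c lam : ℝ} (hc : 0 < c)
    (hp : 0 < (μ {ω | c < ξ ω}).toReal) (hl : 0 ≤ lam)
    (hi : Integrable (fun ω => exp (lam * ξ ω)) μ) :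
    lam * c + Real.log ((μ {ω | c < ξ ω}).toReal) ≤ Real.log (mgf ξ μ lam) := by
  set A := {ω | c < ξ ω} with hA
  have hAm : MeasurableSet A := measurableSet_lt measurable_const hξ
  have hlow : ∫ ω, A.indicator (fun _ => exp (lam * c)) ω ∂μ ≤ ∫ ω, exp (lam * ξ ω) ∂μ := by
    apply integral_mono ((integrable_const _).indicator hAm) hi
    intro ω
    by_cases hω : ω ∈ A
    · rw [Set.indicator_of_mem hω]
      exact exp_le_exp.mpr (mul_le_mul_of_nonneg_left (le_of_lt hω) hl)
    · rw [Set.indicator_of_notMem hω]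
      exact (exp_pos _).le
  rw [integral_indicator_const _ hAm, smul_eq_mul] at hlow
  have h2 : exp (lam * c) * (μ A).toReal ≤ mgf ξ μ lam := by
    rw [mgf]; rw [mul_comm] at hlow; exact hlow
  calc lam * c + Real.log ((μ A).toReal)
      = Real.log (exp (lam * c) * (μ A).toReal) := by
        rw [Real.log_mul (exp_pos _).ne' hp.ne', Real.log_exp]
    _ ≤ Real.log (mgf ξ μ lam) := Real.log_le_log (by positivity) h2

lemma chernoff_perm (μ : Measure Ω) [IsProbabilityMeasure μ]
    (ξ : Ω → ℝ) (n : ℕ) (X : Fin n × Fin n → Ω → ℝ) (hmeas : ∀ e, Measurable (X e))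
    (hind : iIndepFun X μ)
    (hid : ∀ e, IdentDistrib (X e) ξ μ μ) {lam a : ℝ} (hlam0 : 0 ≤ lam)
    (hint : Integrable (fun ω => exp (lam * ξ ω)) μ) (σ : Equiv.Perm (Fin n)) :
    (μ {ω | a ≤ ∑ i, X (i, σ i) ω}).toReal ≤
      exp (-lam * a) * exp (Real.log (mgf ξ μ lam)) ^ n := by
  classical
  set s : Finset (Fin n × Fin n) := Finset.univ.image (fun i => (i, σ i)) with hs
  have hinj : Function.Injective (fun i : Fin n => (i, σ i)) := by
    intro a b h
    exact congrArg Prod.fst h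
  have hcard : s.card = n := by
    rw [hs, Finset.card_image_of_injective _ hinj, Finset.card_univ, Fintype.card_fin]
  have hinte : ∀ e, Integrable (fun ω => exp (lam * X e ω)) μ := by
    intro e
    have h := ((hid e).comp (u := fun x => exp (lam * x))
      (measurable_exp.comp (measurable_const_mul lam))).integrable_iff
    exact h.mpr hint
  have hint_sum : Integrable (fun ω => exp (lam * (∑ e ∈ s, X e) ω)) μ :=
    hind.integrable_exp_mul_sum hmeas (fun e _ => hinte e)
  have hmgf_e : ∀ e, mgf (X e) μ lam = mgf ξ μ lam := by
    intro e
    exact ((hid e).comp (u := fun x => exp (lam * x))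
      (measurable_exp.comp (measurable_const_mul lam))).integral_eq
  have chern := measure_ge_le_exp_mul_mgf (X := ∑ e ∈ s, X e) (μ := μ) a hlam0 hint_sum
  have hmgf_sum : mgf (∑ e ∈ s, X e) μ lam = mgf ξ μ lam ^ n := by
    rw [hind.mgf_sum hmeas s]
    rw [Finset.prod_congr rfl (fun e _ => hmgf_e e), Finset.prod_const, hcard]
  have hset : {ω | a ≤ (∑ e ∈ s, X e) ω} = {ω | a ≤ ∑ i, X (i, σ i) ω} := by
    ext ω
    simp only [Set.mem_setOf_eq, Finset.sum_apply]
    rw [Finset.sum_image (fun x _ y _ h => hinj h)]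
  rw [hset, hmgf_sum] at chern
  rwa [Real.exp_log (mgf_pos hint)]

end AuxiliaryLemmas

set_option maxHeartbeats 1000000 in
/-- with i.i.d. good edge weights on `K_{n,n}`, the maximal weight `W_n` of a
perfect matching satisfies, for every `n ≥ 7`,
`P(W_n > (1 + 1/n) n Λ*⁻¹(log n)) ≤ e^{-n}`. -/
theorem assignment_upper_bound {Ω : Type*} [MeasurableSpace Ω] (μ : Measure Ω)
    [IsProbabilityMeasure μ] (ξ : Ω → ℝ) (hξ : Measurable ξ) (hgood : Good μ ξ)
    (n : ℕ) (hn : 7 ≤ n)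
    (X : Fin n × Fin n → Ω → ℝ) (hmeas : ∀ e, Measurable (X e))
    (hind : iIndepFun X μ)
    (hid : ∀ e, IdentDistrib (X e) ξ μ μ) :
    μ {ω | (1 + 1 / (n : ℝ)) * n * rateFnInv μ ξ (Real.log n) <
        ⨆ σ : Equiv.Perm (Fin n), ∑ i, X (i, σ i) ω} ≤
      ENNReal.ofReal (Real.exp (-(n : ℝ))) := by
  classical
  obtain ⟨hsym, hfin, -⟩ := hgood
  have hn7 : (7:ℝ) ≤ (n:ℝ) := by exact_mod_cast hn
  have hn0 : (0:ℝ) < n := by linarith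
  set L := Real.log (n:ℝ) with hLdef
  have hL : 0 < L := Real.log_pos (by linarith)
  set S := {s : ℝ | 0 ≤ s ∧ (L : EReal) ≤ rateFn μ ξ s} with hSdef
  have hSne : S.Nonempty := by
    obtain ⟨δ, hδpos, hδ⟩ := hfin
    have hδ2 : 0 < δ/2 := by linarith
    have hs0 : |δ/2| < δ := by rw [abs_of_pos hδ2]; linarith
    have hint : Integrable (fun ω => exp (δ/2 * ξ ω)) μ := by
      by_contra h
      exact hδ _ hs0 (lmgf_of_not_int h)
    set r := Real.log (mgf ξ μ (δ/2)) with hrdef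
    set T := max 0 ((L + r)/(δ/2) + 1) with hTdef
    refine ⟨T, le_max_left _ _, ?_⟩
    rw [rateFn]
    refine le_trans ?_ (le_iSup (fun s : ℝ => ((s * T : ℝ) : EReal) - lmgf μ ξ s) (δ/2))
    rw [lmgf_of_int hint, ← hrdef, ← EReal.coe_sub, EReal.coe_le_coe_iff]
    have h1 : (L + r)/(δ/2) + 1 ≤ T := le_max_right _ _
    have h2 := mul_le_mul_of_nonneg_left h1 hδ2.le
    have h3 : δ/2 * ((L + r)/(δ/2) + 1) = L + r + δ/2 := by field_simp
    nlinarith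
  have hSbdd : BddBelow S := ⟨0, fun s hs => hs.1⟩
  have htinv : rateFnInv μ ξ L = sInf S := by rw [rateFnInv, hSdef]
  clear_value L
  set tstar := rateFnInv μ ξ L with htsdef
  clear_value tstar
  have hts0 : 0 ≤ tstar := by
    rw [htinv]
    exact le_csInf hSne (fun s hs => hs.1)
  set a := (1 + 1/(n:ℝ)) * n * tstar with hadef
  clear_value a
  by_cases hdeg : ∀ c : ℝ, 0 < c → μ {ω | c < ξ ω} = 0
  · -- degenerate case : ξ = 0 a.s.
    have hpos0 : μ {ω | 0 < ξ ω} = 0 := by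
      have hsub : {ω | 0 < ξ ω} ⊆ ⋃ k : ℕ, {ω | 1/((k:ℝ)+1) < ξ ω} := by
        intro ω hω
        obtain ⟨k, hk⟩ := exists_nat_one_div_lt (show (0:ℝ) < ξ ω from hω)
        exact Set.mem_iUnion.mpr ⟨k, hk⟩
      exact measure_mono_null hsub (measure_iUnion_null fun k => hdeg _ (by positivity))
    have hneg0 : μ {ω | ξ ω < 0} = 0 := by
      have h1 : Measure.map ξ μ (Set.Iio 0) = Measure.map (fun ω => -ξ ω) μ (Set.Iio 0) := by
        rw [hsym]
      rw [Measure.map_apply hξ measurableSet_Iio, Measure.map_apply (f := fun ω => -ξ ω) hξ.neg measurableSet_Iio] at h1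
      have h2 : (fun ω => -ξ ω) ⁻¹' (Set.Iio 0) = {ω | 0 < ξ ω} := by
        ext ω; simp
      have h3 : ξ ⁻¹' Set.Iio 0 = {ω | ξ ω < 0} := rfl
      rw [h2, h3] at h1
      rw [h1]; exact hpos0
    have hne0 : μ {ω | ξ ω ≠ 0} = 0 := by
      refine measure_mono_null (fun ω hω => ?_) (measure_union_null hneg0 hpos0)
      rcases lt_or_gt_of_ne hω with h | h
      · exact Or.inl h
      · exact Or.inr h
    have hXe : ∀ e, μ {ω | X e ω ≠ 0} = 0 := by
      intro e
      have hm : MeasurableSet ({x : ℝ | x ≠ 0}) := (measurableSet_singleton (0:ℝ)).compl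
      have h1 : μ {ω | X e ω ≠ 0} = Measure.map (X e) μ {x | x ≠ 0} := by
        rw [Measure.map_apply (hmeas e) hm]; rfl
      rw [h1, (hid e).map_eq, Measure.map_apply hξ hm]
      exact hne0
    have hall : μ (⋃ e, {ω | X e ω ≠ 0}) = 0 := measure_iUnion_null hXe
    refine le_trans (le_trans (measure_mono ?_) (le_of_eq hall)) zero_le
    intro ω hω
    simp only [Set.mem_setOf_eq] at hω
    by_contra hc
    simp only [Set.mem_iUnion, Set.mem_setOf_eq, not_exists, not_not] at hc
    have hz : ∀ σ : Equiv.Perm (Fin n), ∑ i, X (i, σ i) ω = 0 :=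
      fun σ => Finset.sum_eq_zero (fun i _ => hc _)
    have hsup : (⨆ σ : Equiv.Perm (Fin n), ∑ i, X (i, σ i) ω) = 0 := by
      simp only [hz]; exact ciSup_const
    rw [hsup] at hω
    have ha0 : 0 ≤ a := by
      rw [hadef]
      apply mul_nonneg (by positivity) hts0
    linarith
  · -- non-degenerate case
    push_neg at hdeg
    obtain ⟨c, hc, hpne⟩ := hdeg
    set p := (μ {ω | c < ξ ω}).toReal with hpdef
    have hp : 0 < p := ENNReal.toReal_pos hpne (measure_ne_top μ _)
    set B := max (-Real.log p) 0 with hBdef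
    have hB0 : 0 ≤ B := le_max_right _ _
    have hub : ∀ s : ℝ, 0 ≤ s → s ≤ c → rateFn μ ξ s ≤ ((s / c * B : ℝ) : EReal) := by
      intro s h0 hsc
      refine rateFn_scale hξ hsym h0 hsc hc hB0 (fun lam hl hi => ?_)
      have h1 := lmgf_lower hξ hc hp hl hi
      have h2 : lam * c - Real.log (mgf ξ μ lam) ≤ -Real.log p := by
        rw [← hpdef] at h1; linarith
      exact h2.trans (le_max_left _ _)
    have hts_pos : 0 < tstar := by
      have hm : 0 < min c (c * L / (B + 1)) := lt_min hc (div_pos (mul_pos hc hL) (by linarith))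
      have hmin : min c (c * L / (B+1)) ≤ sInf S := by
        apply le_csInf hSne
        intro s hs
        rcases le_or_gt s c with h1 | h1
        · have h2 := (hs.2.trans (hub s hs.1 h1))
          rw [EReal.coe_le_coe_iff] at h2
          have hBpos : 0 < B := by
            by_contra hB'
            push_neg at hB'
            have : s / c * B ≤ 0 := mul_nonpos_of_nonneg_of_nonpos (div_nonneg hs.1 hc.le) hB'
            linarith
          have hsge : c * L / (B+1) ≤ s := by
            rw [div_le_iff₀ (by positivity)]
            have h4 : s / c * B * c = s * B := by field_simp
            nlinarith [hs.1]
          exact le_trans (min_le_right _ _) hsge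
        · exact le_trans (min_le_left _ _) h1.le
      rw [htinv]
      linarith
    set u := (1 + 1/(n:ℝ)) * tstar with hudef
    clear_value u
    have h1n : 0 < 1/(n:ℝ) := by positivity
    have hu_pos : 0 < u := by
      rw [hudef]; nlinarith
    have htu : tstar < u := by
      rw [hudef]; nlinarith
    have claimA : ∀ v : ℝ, tstar < v → (L : EReal) ≤ rateFn μ ξ v := by
      intro v hv
      rw [htinv] at hv
      obtain ⟨s, hsS, hsv⟩ := exists_lt_of_csInf_lt hSne hv
      exact hsS.2.trans (rateFn_mono hξ hsym hsS.1 hsv.le)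
    have hne_bot : rateFn μ ξ u ≠ ⊥ := by
      intro h
      have h2 := rateFn_nonneg (μ := μ) (ξ := ξ) u
      rw [h] at h2
      simp at h2
    set c0 := (1 + 1/(n:ℝ)) * L with hc0def
    clear_value c0
    have hc0 : 0 < c0 := by rw [hc0def]; nlinarith
    have claimB : (c0 : EReal) ≤ rateFn μ ξ u := by
      by_cases htop : rateFn μ ξ u = ⊤
      · rw [htop]; exact le_top
      · set r := (rateFn μ ξ u).toReal with hrdef
        have hru : rateFn μ ξ u = (r : EReal) := (EReal.coe_toReal htop hne_bot).symm
        have hr0 : 0 ≤ r := by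
          have h2 := rateFn_nonneg (μ := μ) (ξ := ξ) u
          rw [hru] at h2
          exact_mod_cast h2
        have hterm : ∀ lam : ℝ, 0 ≤ lam → Integrable (fun ω => exp (lam * ξ ω)) μ →
            lam * u - Real.log (mgf ξ μ lam) ≤ r := by
          intro lam _ hi
          have h1 : ((lam * u - Real.log (mgf ξ μ lam) : ℝ) : EReal) ≤ rateFn μ ξ u := by
            rw [rateFn]
            refine le_trans ?_ (le_iSup (fun s : ℝ => ((s * u : ℝ) : EReal) - lmgf μ ξ s) lam)
            rw [lmgf_of_int hi, ← EReal.coe_sub]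
          rw [hru, EReal.coe_le_coe_iff] at h1
          exact h1
        have step : ∀ v : ℝ, tstar < v → v < u → L * u ≤ v * r := by
          intro v hv1 hv2
          have h1 := claimA v hv1
          have h2 := rateFn_scale hξ hsym (le_trans hts0 hv1.le) hv2.le hu_pos hr0 hterm
          have h3 : L ≤ v / u * r := by exact_mod_cast h1.trans h2
          have h4 := mul_le_mul_of_nonneg_right h3 hu_pos.le
          have h5 : v / u * r * u = v * r := by field_simp
          linarith
        have hfin2 : L * u ≤ tstar * r := by
          by_contra hcon
          push_neg at hcon
          have hrpos : 0 < r := by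
            by_contra hr'
            push_neg at hr'
            obtain ⟨v, hv1, hv2⟩ := exists_between htu
            have h6 := step v hv1 hv2
            have hv0 : 0 ≤ v := le_trans hts0 hv1.le
            nlinarith
          have hlt : tstar < L*u/r := by
            rw [lt_div_iff₀ hrpos]; nlinarith
          obtain ⟨v, hv1, hv2⟩ := exists_between (lt_min htu hlt)
          have hvu : v < u := lt_of_lt_of_le hv2 (min_le_left _ _)
          have hvr : v < L*u/r := lt_of_lt_of_le hv2 (min_le_right _ _)
          have h6 := step v hv1 hvu
          rw [lt_div_iff₀ hrpos] at hvr
          linarith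
        rw [hru, EReal.coe_le_coe_iff]
        have h7 : L * ((1 + 1/(n:ℝ)) * tstar) ≤ tstar * r := by rw [← hudef]; exact hfin2
        rw [hc0def]
        nlinarith
    have key : ∀ ε : ℝ, 0 < ε → (μ {ω | a < ⨆ σ : Equiv.Perm (Fin n), ∑ i, X (i, σ i) ω}).toReal
        ≤ (n.factorial : ℝ) * exp (-(n:ℝ) * c0) * exp ((n:ℝ) * ε) := by
      intro ε hε
      set ε' := min ε (c0/2) with hε'def
      have hε'pos : 0 < ε' := lt_min hε (by linarith)
      have hε'le : ε' ≤ ε := min_le_left _ _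
      have hε'c : ε' ≤ c0/2 := min_le_right _ _
      have h1 : ((c0 - ε' : ℝ) : EReal) < rateFn μ ξ u := by
        refine lt_of_lt_of_le ?_ claimB
        exact_mod_cast (by linarith : c0 - ε' < c0)
      rw [rateFn] at h1
      obtain ⟨lam, hlam⟩ := lt_iSup_iff.mp h1
      have hint : Integrable (fun ω => exp (lam * ξ ω)) μ := by
        by_contra h
        rw [lmgf_of_not_int h, EReal.sub_top] at hlam
        exact absurd hlam (by simp)
      rw [lmgf_of_int hint, ← EReal.coe_sub, EReal.coe_lt_coe_iff] at hlam
      set Mr := Real.log (mgf ξ μ lam) with hMrdef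
      have hMr0 : 0 ≤ Mr := log_mgf_nonneg hξ hsym hint
      have hlam0 : 0 ≤ lam := by
        by_contra h
        push_neg at h
        nlinarith [mul_neg_of_neg_of_pos h hu_pos]
      have hna : a = n * u := by rw [hadef, hudef]; ring
      have hbound : ∀ σ : Equiv.Perm (Fin n),
          μ {ω | a ≤ ∑ i, X (i, σ i) ω} ≤ ENNReal.ofReal (exp (-lam * a) * exp Mr ^ n) := by
        intro σ
        rw [ENNReal.le_ofReal_iff_toReal_le (measure_ne_top μ _) (by positivity)]
        exact chernoff_perm μ ξ n X hmeas hind hid hlam0 hint σ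
      have hsub : {ω | a < ⨆ σ : Equiv.Perm (Fin n), ∑ i, X (i, σ i) ω}
          ⊆ ⋃ σ : Equiv.Perm (Fin n), {ω | a ≤ ∑ i, X (i, σ i) ω} := by
        intro ω hω
        simp only [Set.mem_setOf_eq] at hω
        obtain ⟨σ, hσ⟩ := exists_lt_of_lt_ciSup hω
        exact Set.mem_iUnion.mpr ⟨σ, hσ.le⟩
      have hmeasle : μ {ω | a < ⨆ σ : Equiv.Perm (Fin n), ∑ i, X (i, σ i) ω}
          ≤ (n.factorial : ℕ) • ENNReal.ofReal (exp (-lam * a) * exp Mr ^ n) := by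
        calc μ {ω | a < ⨆ σ : Equiv.Perm (Fin n), ∑ i, X (i, σ i) ω}
            ≤ μ (⋃ σ : Equiv.Perm (Fin n), {ω | a ≤ ∑ i, X (i, σ i) ω}) := measure_mono hsub
          _ ≤ ∑ σ : Equiv.Perm (Fin n), μ {ω | a ≤ ∑ i, X (i, σ i) ω} :=
              measure_iUnion_fintype_le _ _
          _ ≤ ∑ _σ : Equiv.Perm (Fin n), ENNReal.ofReal (exp (-lam * a) * exp Mr ^ n) :=
              Finset.sum_le_sum (fun σ _ => hbound σ)
          _ = (Fintype.card (Equiv.Perm (Fin n))) • ENNReal.ofReal (exp (-lam * a) * exp Mr ^ n) := by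
              rw [Finset.sum_const, Finset.card_univ]
          _ = (n.factorial : ℕ) • ENNReal.ofReal (exp (-lam * a) * exp Mr ^ n) := by
              rw [Fintype.card_perm, Fintype.card_fin]
      have hRHS_ne : ((n.factorial : ℕ) • ENNReal.ofReal (exp (-lam * a) * exp Mr ^ n)) ≠ ⊤ := by
        rw [nsmul_eq_mul]
        exact ENNReal.mul_ne_top (by simp) ENNReal.ofReal_ne_top
      have h2 : (μ {ω | a < ⨆ σ : Equiv.Perm (Fin n), ∑ i, X (i, σ i) ω}).toReal
          ≤ (n.factorial : ℝ) * (exp (-lam * a) * exp Mr ^ n) := by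
        have h3 := ENNReal.toReal_mono hRHS_ne hmeasle
        rwa [nsmul_eq_mul, ENNReal.toReal_mul, ENNReal.toReal_natCast,
          ENNReal.toReal_ofReal (by positivity)] at h3
      have h3 : exp (-lam * a) * exp Mr ^ n ≤ exp (-(n:ℝ) * c0) * exp ((n:ℝ) * ε) := by
        rw [← Real.exp_nat_mul, ← Real.exp_add, ← Real.exp_add]
        apply Real.exp_le_exp.mpr
        rw [hna]
        nlinarith [hlam.le, hn0, hε'le]
      calc (μ {ω | a < ⨆ σ : Equiv.Perm (Fin n), ∑ i, X (i, σ i) ω}).toReal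
          ≤ (n.factorial : ℝ) * (exp (-lam * a) * exp Mr ^ n) := h2
        _ ≤ (n.factorial : ℝ) * (exp (-(n:ℝ) * c0) * exp ((n:ℝ) * ε)) := by
            have : (0:ℝ) ≤ (n.factorial : ℝ) := by positivity
            nlinarith [h3]
        _ = (n.factorial : ℝ) * exp (-(n:ℝ) * c0) * exp ((n:ℝ) * ε) := by ring
    set C := (n.factorial : ℝ) * exp (-(n:ℝ) * c0) with hCdef
    have hCpos : 0 < C := by rw [hCdef]; positivity
    set q := (μ {ω | a < ⨆ σ : Equiv.Perm (Fin n), ∑ i, X (i, σ i) ω}).toReal with hqdef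
    have hqC : q ≤ C := by
      by_contra hcon
      push_neg at hcon
      have hq0 : 0 < q := lt_trans hCpos hcon
      set x := Real.log (q / C) with hxdef
      have hx0 : 0 < x := Real.log_pos (by rw [lt_div_iff₀ hCpos]; linarith)
      have hkey := key (x/(2*n)) (by positivity)
      have he : (n:ℝ) * (x/(2*(n:ℝ))) = x/2 := by field_simp
      rw [he] at hkey
      have h5 : exp (x/2) < exp x := Real.exp_lt_exp.mpr (by linarith)
      have h6 : exp x = q / C := Real.exp_log (by positivity)
      have h7 : C * exp x = q := by rw [h6]; field_simp
      nlinarith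
    refine (ENNReal.le_ofReal_iff_toReal_le (measure_ne_top μ _) (exp_nonneg _)).mpr
      (le_trans hqC ?_)
    have hnc0 : -(n:ℝ) * c0 = -(((n:ℝ)+1) * L) := by
      rw [hc0def]; field_simp
    have hexp : exp (-(n:ℝ) * c0) = ((n:ℝ) ^ (n+1))⁻¹ := by
      rw [hnc0, Real.exp_neg]
      congr 1
      rw [show ((n:ℝ)+1) * L = (((n+1:ℕ)):ℝ) * L by push_cast; ring,
        Real.exp_nat_mul, hLdef, Real.exp_log hn0]
    rw [hCdef, hexp]
    have hfb := factorial_bound_aux n hn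
    have hpow : (0:ℝ) < (n:ℝ) ^ (n+1) := by positivity
    rw [← div_eq_mul_inv, show Real.exp (-(n:ℝ)) = 1 / Real.exp (n:ℝ) by
      rw [Real.exp_neg, one_div], div_le_div_iff₀ hpow (Real.exp_pos _)]
    linarith
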